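/- Let m > 0 and p⃗, q⃗ ∈ ℝ³, and set p⁰ = ω_m(p⃗), q⁰ = ω_m(q⃗). Then |p⃗−q⃗|² − (p⁰−q⁰)² ≥ 4m²|p⃗−q⃗|²/(p⁰+q⁰)²; equivalently, for p = (p⁰,p⃗) and q = (q⁰,q⃗) on the mass-m hyperboloid, −(p−q)·(p−q) ≥ 4m²|p⃗−q⃗|²/(p⁰+q⁰)². -/

import Mathlib

/-!
Statement 7: for `p,q` on the mass-`m` hyperboloid,
`|p⃗−q⃗|² − (p⁰−q⁰)² ≥ 4m²|p⃗−q⃗|²/(p⁰+q⁰)²`.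
-/

open Real

noncomputable section

abbrev V3 := EuclideanSpace ℝ (Fin 3)

theorem hyperboloid_difference_bound (m : ℝ) (hm : 0 < m) (p q : V3) :
    4 * m ^ 2 * ‖p - q‖ ^ 2 /
        (Real.sqrt (m ^ 2 + ‖p‖ ^ 2) + Real.sqrt (m ^ 2 + ‖q‖ ^ 2)) ^ 2 ≤
      ‖p - q‖ ^ 2 - (Real.sqrt (m ^ 2 + ‖p‖ ^ 2) - Real.sqrt (m ^ 2 + ‖q‖ ^ 2)) ^ 2 := by
  set a := Real.sqrt (m ^ 2 + ‖p‖ ^ 2) with ha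
  set b := Real.sqrt (m ^ 2 + ‖q‖ ^ 2) with hb
  have ha2 : a ^ 2 = m ^ 2 + ‖p‖ ^ 2 := Real.sq_sqrt (by positivity)
  have hb2 : b ^ 2 = m ^ 2 + ‖q‖ ^ 2 := Real.sq_sqrt (by positivity)
  have hapos : 0 < a := Real.sqrt_pos.2 (by positivity)
  have hbpos : 0 < b := Real.sqrt_pos.2 (by positivity)
  set t : ℝ := inner ℝ p q with htdef
  have ht : |t| ≤ ‖p‖ * ‖q‖ := abs_real_inner_le_norm p q
  have ht2 : t ^ 2 ≤ ‖p‖ ^ 2 * ‖q‖ ^ 2 := by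
    calc t ^ 2 = |t| ^ 2 := (sq_abs t).symm
      _ ≤ (‖p‖ * ‖q‖) ^ 2 := pow_le_pow_left₀ (abs_nonneg t) ht 2
      _ = ‖p‖ ^ 2 * ‖q‖ ^ 2 := by ring
  have hD : ‖p - q‖ ^ 2 = ‖p‖ ^ 2 - 2 * t + ‖q‖ ^ 2 := by
    rw [@norm_sub_sq_real]
  have hDnn : (0:ℝ) ≤ ‖p - q‖ ^ 2 := sq_nonneg _
  have habsq : (m ^ 2 + t) ^ 2 ≤ (a * b) ^ 2 := by
    have : (a * b) ^ 2 = (m ^ 2 + ‖p‖ ^ 2) * (m ^ 2 + ‖q‖ ^ 2) := by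
      rw [mul_pow, ha2, hb2]
    nlinarith [sq_nonneg (‖p‖ - ‖q‖), hDnn, hD]
  have hab : m ^ 2 + t ≤ a * b := by
    nlinarith [mul_pos hapos hbpos]
  rw [div_le_iff₀ (by positivity)]
  nlinarith [sq_nonneg (‖p‖ ^ 2 - ‖q‖ ^ 2), mul_le_mul_of_nonneg_left hab hDnn,
    mul_nonneg (mul_nonneg (le_of_lt hm) (le_of_lt hm)) hDnn, sq_nonneg (a + b),
    mul_pos hapos hbpos]
  done

end
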